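/- If k ≡ 1 (mod 5), then the complete tripartite graph K_{4k,4k,4k} has no equitable (12m+2, 3)-tree-coloring where k = 5m+1; hence va₃≡(K_{4k,4k,4k}) ≥ (12k+3)/5. -/

import Mathlib

open SimpleGraph

/-- `G` has an equitable `(t,k)`-tree-coloring: a map `f : V → Fin t` whose color
classes have sizes differing by at most 1, and each color class induces a forest
(each component a tree) of maximum degree at most `k`. -/
def EqTreeColorable {V : Type} [Fintype V] (G : SimpleGraph V) (t k : ℕ) : Prop :=
  ∃ f : V → Fin t,
    (∀ i j : Fin t, ({v | f v = i} : Set V).ncard ≤ ({v | f v = j} : Set V).ncard + 1) ∧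
    (∀ i : Fin t, (G.induce {v | f v = i}).IsAcyclic) ∧
    (∀ i : Fin t, ∀ v, ((G.induce {v | f v = i}).neighborSet v).ncard ≤ k)

/-- The strong equitable vertex `k`-arboricity: the least `t` such that `G` has an
equitable `(t',k)`-tree-coloring for every `t' ≥ t`. -/
noncomputable def vaStrong {V : Type} [Fintype V] (G : SimpleGraph V) (k : ℕ) : ℕ :=
  sInf {t | ∀ t', t ≤ t' → EqTreeColorable G t' k}

/-- The complete tripartite graph `K_{n,n,n}`. -/
def K3 (n : ℕ) : SimpleGraph (Σ _ : Fin 3, Fin n) :=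
  completeMultipartiteGraph (fun _ => Fin n)


lemma eqTreeColorable_of_card_le {V : Type} [Fintype V] (G : SimpleGraph V) (t k : ℕ)
    (h : Fintype.card V ≤ t) : EqTreeColorable G t k := by
  set f : V → Fin t := fun v => (Fin.castLEEmb h) ((Fintype.equivFin V) v) with hf
  have hinj : Function.Injective f := by
    intro a b hab
    exact (Fintype.equivFin V).injective ((Fin.castLEEmb h).injective hab)
  have hss : ∀ i : Fin t, ({v | f v = i} : Set V).Subsingleton := by
    intro i a ha b hb
    exact hinj (ha.trans hb.symm)
  have hnoadj : ∀ i : Fin t, ∀ a b : ({v | f v = i} : Set V),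
      ¬ (G.induce {v | f v = i}).Adj a b := by
    intro i a b hab
    exact hab.ne (Subtype.ext ((hss i) a.2 b.2))
  refine ⟨f, ?_, ?_, ?_⟩
  · intro i j
    calc ({v | f v = i} : Set V).ncard ≤ 1 := (Set.ncard_le_one_iff (Set.toFinite _)).mpr (fun ha hb => (hss i) ha hb)
      _ ≤ _ + 1 := Nat.le_add_left 1 _
  · intro i v c hc
    cases c with
    | nil => exact hc.ne_nil rfl
    | cons hadj p => exact hnoadj i _ _ hadj
  · intro i v
    have : (G.induce {v | f v = i}).neighborSet v = ∅ := by
      ext w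
      simp only [mem_neighborSet, Set.mem_empty_iff_false, iff_false]
      exact hnoadj i v w
    simp [this]

lemma K3_adj {n : ℕ} (a b : Σ _ : Fin 3, Fin n) : (K3 n).Adj a b ↔ a.1 ≠ b.1 := by
  simp [K3, completeMultipartiteGraph]

lemma key (m : ℕ) : ¬ EqTreeColorable (K3 (4 * (5 * m + 1))) (12 * m + 2) 3 := by
  set n := 4 * (5 * m + 1) with hn
  set t := 12 * m + 2 with ht
  rintro ⟨f, hEq, hAcyc, hDeg⟩
  classical
  -- finset cardinalities
  set N : Fin t → ℕ := fun i => (Finset.univ.filter (fun v : Σ _ : Fin 3, Fin n => f v = i)).card with hN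
  have hNcard : ∀ i, ({v | f v = i} : Set (Σ _ : Fin 3, Fin n)).ncard = N i := by
    intro i
    rw [Set.ncard_eq_toFinset_card', Set.toFinset_setOf]
  have hcardV : Fintype.card (Σ _ : Fin 3, Fin n) = 12 * (5 * m + 1) := by
    simp [Fintype.card_sigma, hn]
    ring
  have hsum : ∑ i : Fin t, N i = 12 * (5 * m + 1) := by
    rw [← hcardV, ← Finset.card_univ]
    exact (Finset.card_eq_sum_card_fiberwise (fun v _ => Finset.mem_univ (f v))).symm
  -- every class has at least 5 elements
  have h5 : ∀ i, 5 ≤ N i := by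
    intro i
    by_contra hlt
    push_neg at hlt
    have hub : ∀ j : Fin t, N j ≤ N i + 1 := by
      intro j
      have := hEq j i
      rwa [hNcard, hNcard] at this
    have : ∑ j : Fin t, N j ≤ ∑ _j : Fin t, (N i + 1) := Finset.sum_le_sum (fun j _ => hub j)
    rw [hsum, Finset.sum_const, Finset.card_univ, Fintype.card_fin, smul_eq_mul] at this
    have : 12 * (5 * m + 1) ≤ (12 * m + 2) * 5 := le_trans this (by
      have : N i + 1 ≤ 5 := by omega
      exact Nat.mul_le_mul_left _ this)
    omega
  -- each class lies within one part
  have hOnePart : ∀ i : Fin t, ∀ u v : Σ _ : Fin 3, Fin n,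
      f u = i → f v = i → u.1 = v.1 := by
    intro i u v hu hv
    by_contra hne
    set S : Set (Σ _ : Fin 3, Fin n) := {v | f v = i} with hS
    have hadj : ∀ P Q : ↥S, P.1.1 ≠ Q.1.1 → ((K3 n).induce S).Adj P Q := by
      intro P Q h
      simp only [induce, comap_adj, Function.Embedding.coe_subtype, K3_adj]
      exact h
    set Ci := Finset.univ.filter (fun w : Σ _ : Fin 3, Fin n => f w = i) with hCi
    have hCi5 : 5 ≤ Ci.card := h5 i
    have hfib : Ci.card = ∑ j : Fin 3, (Ci.filter (fun w => w.1 = j)).card :=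
      Finset.card_eq_sum_card_fiberwise (fun w _ => Finset.mem_univ w.1)
    have hex : ∃ j : Fin 3, 2 ≤ (Ci.filter (fun w => w.1 = j)).card := by
      by_contra hc; push_neg at hc
      have hle : ∑ j : Fin 3, (Ci.filter (fun w => w.1 = j)).card ≤ ∑ _j : Fin 3, 1 :=
        Finset.sum_le_sum (fun j _ => by have := hc j; omega)
      simp only [Finset.sum_const, Finset.card_univ, Fintype.card_fin, smul_eq_mul,
        mul_one] at hle
      omega
    obtain ⟨j, hj2⟩ := hex
    obtain ⟨a, ha, b, hb, hab⟩ := Finset.one_lt_card.mp hj2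
    simp only [Finset.mem_filter, Finset.mem_univ, true_and, hCi] at ha hb
    obtain ⟨x, hx, hxj⟩ : ∃ x, f x = i ∧ x.1 ≠ j := by
      by_cases h : u.1 = j
      · exact ⟨v, hv, fun hh => hne (h.trans hh.symm)⟩
      · exact ⟨u, hu, h⟩
    have hmem : ∀ w : Σ _ : Fin 3, Fin n, f w = i → w ∈ S := fun w hw => hw
    set A : ↥S := ⟨a, hmem a ha.1⟩ with hA
    set B : ↥S := ⟨b, hmem b hb.1⟩ with hB
    set X : ↥S := ⟨x, hmem x hx⟩ with hX
    by_cases hy : ∃ y, f y = i ∧ y ≠ x ∧ y.1 ≠ j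
    · -- two distinct paths from A to B, contradicting acyclicity
      obtain ⟨y, hyi, hyx, hyj⟩ := hy
      set Y : ↥S := ⟨y, hmem y hyi⟩ with hY
      have hAX : ((K3 n).induce S).Adj A X := hadj A X (by rw [ha.2]; exact fun h => hxj h.symm)
      have hXB : ((K3 n).induce S).Adj X B := hadj X B (by rw [hb.2]; exact hxj)
      have hAY : ((K3 n).induce S).Adj A Y := hadj A Y (by rw [ha.2]; exact fun h => hyj h.symm)
      have hYB : ((K3 n).induce S).Adj Y B := hadj Y B (by rw [hb.2]; exact hyj)
      have hAneX : A ≠ X := fun h => hxj (by rw [← congrArg (fun z : ↥S => z.1.1) h, ha.2])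
      have hAneB : A ≠ B := fun h => hab (congrArg Subtype.val h)
      have hXneB : X ≠ B := fun h => hxj (by rw [congrArg (fun z : ↥S => z.1.1) h, hb.2])
      have hAneY : A ≠ Y := fun h => hyj (by rw [← congrArg (fun z : ↥S => z.1.1) h, ha.2])
      have hYneB : Y ≠ B := fun h => hyj (by rw [congrArg (fun z : ↥S => z.1.1) h, hb.2])
      have hXneY : X ≠ Y := fun h => hyx (congrArg Subtype.val h).symm
      set p1 : ((K3 n).induce S).Walk A B := Walk.cons hAX (Walk.cons hXB Walk.nil) with hp1
      set p2 : ((K3 n).induce S).Walk A B := Walk.cons hAY (Walk.cons hYB Walk.nil) with hp2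
      have hp1p : p1.IsPath := by
        rw [hp1]
        simp [Walk.isPath_def, hAneX, hAneB, hXneB]
      have hp2p : p2.IsPath := by
        rw [hp2]
        simp [Walk.isPath_def, hAneY, hAneB, hYneB]
      have := isAcyclic_iff_path_unique.mp (hAcyc i) ⟨p1, hp1p⟩ ⟨p2, hp2p⟩
      have hsupp := congrArg (fun q : ((K3 n).induce S).Path A B => q.1.support) this
      simp only [hp1, hp2, Walk.support_cons, Walk.support_nil] at hsupp
      exact hXneY (by injection hsupp with _ h2; injection h2)
    · -- X has degree at least 4
      push_neg at hy
      have hsub : ({X}ᶜ : Set ↥S) ⊆ ((K3 n).induce S).neighborSet X := by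
        intro W hW
        have hWx : W.1 ≠ x := fun h => hW (Subtype.ext h)
        have hWj : W.1.1 = j := hy W.1 W.2 hWx
        exact (hadj X W (by rw [hWj]; exact hxj)).symm.symm
      have hcardS : Fintype.card ↥S = N i := by
        rw [← Nat.card_eq_fintype_card, Nat.card_coe_set_eq, hNcard]
      have hcompl : ({X}ᶜ : Set ↥S).ncard = N i - 1 := by
        rw [Set.compl_eq_univ_diff, Set.ncard_diff (Set.singleton_subset_iff.mpr (Set.mem_univ X)),
          Set.ncard_univ, Set.ncard_singleton, Nat.card_eq_fintype_card, hcardS]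
      have hle := Set.ncard_le_ncard hsub (Set.toFinite _)
      have hdeg3 : (((K3 n).induce S).neighborSet X).ncard ≤ 3 := hDeg i X
      have h5i := h5 i
      omega
  -- choose the part of each class
  have hnonempty : ∀ i : Fin t, ∃ v, f v = i := by
    intro i
    by_contra hcon; push_neg at hcon
    have hz : N i = 0 := by
      rw [hN, Finset.card_eq_zero]
      ext w; simp [hcon w]
    have := h5 i; omega
  choose c hc using hnonempty
  set g : Fin t → Fin 3 := fun i => (c i).1 with hg
  have hgmem : ∀ v, v.1 = g (f v) := fun v => hOnePart (f v) v (c (f v)) rfl (hc (f v))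
  -- count the first part
  set P := Finset.univ.filter (fun v : Σ _ : Fin 3, Fin n => v.1 = (0 : Fin 3)) with hP
  have hPcard : P.card = n := by
    have hb : P.card = (Finset.univ : Finset (Fin n)).card := by
      apply Finset.card_bij' (fun (v : Σ _ : Fin 3, Fin n) _ => v.2)
        (fun (a : Fin n) _ => (⟨0, a⟩ : Σ _ : Fin 3, Fin n))
      · intro v hv
        exact Finset.mem_univ _
      · intro a _
        simp [hP]
      · rintro ⟨v1, v2⟩ hv
        simp only [hP, Finset.mem_filter, Finset.mem_univ, true_and] at hv
        subst hv
        rfl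
      · intro a _
        rfl
    simpa using hb
  set T := Finset.univ.filter (fun i : Fin t => g i = 0) with hT
  have hPfib : P.card = ∑ i ∈ T, (P.filter (fun v => f v = i)).card := by
    apply Finset.card_eq_sum_card_fiberwise
    intro v hv
    simp only [hP, Finset.mem_coe, Finset.mem_filter, Finset.mem_univ, true_and] at hv
    simp only [hT, Finset.mem_coe, Finset.mem_filter, Finset.mem_univ, true_and]
    rw [← hgmem v, hv]
  have hfibN : ∀ i ∈ T, (P.filter (fun v => f v = i)).card = N i := by
    intro i hi
    simp only [hT, Finset.mem_filter, Finset.mem_univ, true_and] at hi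
    rw [hN]
    congr 1
    ext w
    simp only [hP, Finset.filter_filter, Finset.mem_filter, Finset.mem_univ, true_and]
    constructor
    · exact fun h => h.2
    · intro h
      refine ⟨?_, h⟩
      rw [hgmem w, h, hi]
  have hTsum : ∑ i ∈ T, N i = n := by
    rw [← hPcard, hPfib]
    exact Finset.sum_congr rfl (fun i hi => (hfibN i hi).symm)
  -- final counting contradiction
  have hsplit : ∑ i ∈ T, N i + ∑ i ∈ Finset.univ.filter (fun i : Fin t => ¬ g i = 0), N i
      = ∑ i : Fin t, N i := by
    rw [hT]
    exact Finset.sum_filter_add_sum_filter_not _ _ _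
  have hTcard : T.card + (Finset.univ.filter (fun i : Fin t => ¬ g i = 0)).card = t := by
    rw [hT]
    rw [Finset.card_filter_add_card_filter_not]
    simp
  have hTlb : 5 * T.card ≤ ∑ i ∈ T, N i := by
    calc 5 * T.card = T.card * 5 := by ring
    _ ≤ ∑ i ∈ T, N i := Finset.card_nsmul_le_sum T N 5 (fun i _ => h5 i)
  have hTclb : 5 * (Finset.univ.filter (fun i : Fin t => ¬ g i = 0)).card
      ≤ ∑ i ∈ Finset.univ.filter (fun i : Fin t => ¬ g i = 0), N i := by
    calc 5 * _ = _ * 5 := by ring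
    _ ≤ _ := Finset.card_nsmul_le_sum _ N 5 (fun i _ => h5 i)
  rw [hsum] at hsplit
  rw [hTsum] at hsplit hTlb
  omega

theorem stmt5 (k m : ℕ) (hk : k = 5 * m + 1) :
    ¬ EqTreeColorable (K3 (4 * k)) (12 * m + 2) 3 ∧
    (12 * k + 3) / 5 ≤ vaStrong (K3 (4 * k)) 3 := by
  subst hk
  have hkey : ¬ EqTreeColorable (K3 (4 * (5 * m + 1))) (12 * m + 2) 3 := key m
  refine ⟨hkey, ?_⟩
  have hdiv : (12 * (5 * m + 1) + 3) / 5 = 12 * m + 3 := by omega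
  rw [hdiv]
  unfold vaStrong
  have hcard : Fintype.card (Σ _ : Fin 3, Fin (4 * (5 * m + 1))) = 12 * (5 * m + 1) := by
    simp [Fintype.card_sigma]
    ring
  have hmem : (12 * (5 * m + 1)) ∈
      {t | ∀ t', t ≤ t' → EqTreeColorable (K3 (4 * (5 * m + 1))) t' 3} := by
    intro t' ht'
    exact eqTreeColorable_of_card_le _ _ _ (by rw [hcard]; exact ht')
  refine le_csInf ⟨_, hmem⟩ ?_
  intro b hb
  by_contra hlt
  push_neg at hlt
  exact hkey (hb (12 * m + 2) (by omega))
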